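/- For the cyclic biquandle C_m of order m, the n-th integral set-theoretic Yang–Baxter homology group H_n^{YB}(C_m) = ker ∂_n / im ∂_{n+1} has rank m^{n−1} as an abelian group. -/

import Mathlib

/-- The `i`-th left face map of the set-theoretic Yang–Baxter (co)chain complex of the
cyclic biquandle `C_m = ℤ/mℤ` (with `R(a,b) = (b+1, a-1)`): it drops the `i`-th coordinate,
subtracting `1` from all earlier coordinates. -/
def dl (m n : ℕ) (i : Fin (n + 1)) (x : Fin (n + 1) → ZMod m) : Fin n → ZMod m :=
  fun j => if (j : ℕ) < (i : ℕ) then x j.castSucc - 1 else x j.succ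

/-- The `i`-th right face map: it drops the `i`-th coordinate, adding `1` to all later
coordinates. -/
def dr (m n : ℕ) (i : Fin (n + 1)) (x : Fin (n + 1) → ZMod m) : Fin n → ZMod m :=
  fun j => if (j : ℕ) < (i : ℕ) then x j.castSucc else x j.succ + 1

/-- The Yang–Baxter coboundary `δⁿ` of the cyclic biquandle `C_m` with coefficients in an
abelian group `A`:
`(δⁿ f)(x₁,…,x_{n+1}) = Σᵢ (−1)^{i−1} [f(x₁−1,…,x_{i−1}−1,x_{i+1},…) − f(x₁,…,x_{i−1},x_{i+1}+1,…)]`. -/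
def delta {A : Type*} [AddCommGroup A] (m n : ℕ) (f : (Fin n → ZMod m) → A) :
    (Fin (n + 1) → ZMod m) → A :=
  fun x => ∑ i : Fin (n + 1), (-1 : ℤ) ^ (i : ℕ) • (f (dl m n i x) - f (dr m n i x))

/-- The diagonal shift operator `S` on cochains: `(Sf)(x₁,…,x_k) = f(x₁−1,…,x_k−1)`. -/
def shiftC {A : Type*} (m k : ℕ) (f : (Fin k → ZMod m) → A) : (Fin k → ZMod m) → A :=
  fun x => f fun j => x j - 1

/-- The set-theoretic Yang–Baxter boundary `∂ : C_{n+1} → C_n` of the cyclic biquandle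
`C_m`, where `C_k` is the free `ℤ`-module on `(ℤ/m)^k`; on a generator `x`,
`∂x = Σᵢ (−1)^{i−1} [(x₁−1,…,x_{i−1}−1,x_{i+1},…) − (x₁,…,x_{i−1},x_{i+1}+1,…)]`. -/
noncomputable def bnd (m n : ℕ) :
    ((Fin (n + 1) → ZMod m) →₀ ℤ) →ₗ[ℤ] ((Fin n → ZMod m) →₀ ℤ) :=
  Finsupp.linearCombination ℤ fun x =>
    ∑ i : Fin (n + 1), (-1 : ℤ) ^ (i : ℕ) •
      (Finsupp.single (dl m n i x) 1 - Finsupp.single (dr m n i x) 1)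

namespace YBaux

open Finsupp Module

variable {m : ℕ}

abbrev C (m k : ℕ) := (Fin k → ZMod m) →₀ ℤ

noncomputable def Sm (m : ℕ) (c : ZMod m) (k : ℕ) : C m k →ₗ[ℤ] C m k :=
  Finsupp.lmapDomain ℤ ℤ (fun x j => x j + c)

noncomputable def Dm (m k : ℕ) : C m (k+1) →ₗ[ℤ] C m k :=
  Finsupp.linearCombination ℤ fun x =>
    ∑ i : Fin (k+1), (-1:ℤ)^(i:ℕ) • Finsupp.single (dl m k i x) 1

noncomputable def Hm (m : ℕ) [NeZero m] (k : ℕ) : C m k →ₗ[ℤ] C m (k+1) :=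
  Finsupp.linearCombination ℤ fun x => ∑ c : ZMod m, Finsupp.single (Fin.cons c x) 1

noncomputable def Nm (m : ℕ) [NeZero m] (k : ℕ) : C m k →ₗ[ℤ] C m k :=
  ∑ c : ZMod m, Sm m c k

-- extensionality helper
theorem lhom_ext1 {α : Type*} {M : Type*} [AddCommGroup M] [Module ℤ M]
    {φ ψ : (α →₀ ℤ) →ₗ[ℤ] M} (h : ∀ a, φ (Finsupp.single a 1) = ψ (Finsupp.single a 1)) :
    φ = ψ := by
  apply Finsupp.lhom_ext
  intro a b
  have : (Finsupp.single a b : α →₀ ℤ) = b • Finsupp.single a 1 := by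
    rw [Finsupp.smul_single, smul_eq_mul, mul_one]
  rw [this, LinearMap.map_smul, LinearMap.map_smul, h a]

@[simp] theorem Sm_single (c : ZMod m) (k : ℕ) (x : Fin k → ZMod m) (a : ℤ) :
    Sm m c k (Finsupp.single x a) = Finsupp.single (fun j => x j + c) a := by
  simp [Sm, Finsupp.lmapDomain_apply, Finsupp.mapDomain_single]

@[simp] theorem Dm_single (k : ℕ) (x : Fin (k+1) → ZMod m) :
    Dm m k (Finsupp.single x 1) =
      ∑ i : Fin (k+1), (-1:ℤ)^(i:ℕ) • Finsupp.single (dl m k i x) 1 := by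
  simp [Dm, Finsupp.linearCombination_single]

@[simp] theorem Hm_single [NeZero m] (k : ℕ) (x : Fin k → ZMod m) :
    Hm m k (Finsupp.single x 1) = ∑ c : ZMod m, Finsupp.single (Fin.cons c x) 1 := by
  simp [Hm, Finsupp.linearCombination_single]

theorem Nm_single [NeZero m] (k : ℕ) (x : Fin k → ZMod m) (a : ℤ) :
    Nm m k (Finsupp.single x a) = ∑ c : ZMod m, Finsupp.single (fun j => x j + c) a := by
  simp [Nm, LinearMap.sum_apply]

-- pointwise lemmas on dl/dr
theorem dl_addc (k : ℕ) (i : Fin (k+1)) (x : Fin (k+1) → ZMod m) (c : ZMod m) :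
    dl m k i (fun t => x t + c) = fun j => dl m k i x j + c := by
  funext j
  simp only [dl]
  split <;> ring

theorem dr_eq_dl (k : ℕ) (i : Fin (k+1)) (x : Fin (k+1) → ZMod m) :
    dr m k i x = dl m k i (fun t => x t + 1) := by
  funext j
  simp only [dl, dr]
  split <;> ring

theorem dl_cons_zero (k : ℕ) (c : ZMod m) (x : Fin (k+1) → ZMod m) :
    dl m (k+1) 0 (Fin.cons c x) = x := by
  funext j
  simp [dl]

theorem dl_cons_succ (k : ℕ) (i : Fin (k+1)) (c : ZMod m) (x : Fin (k+1) → ZMod m) :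
    dl m (k+1) i.succ (Fin.cons c x) = Fin.cons (c-1) (dl m k i x) := by
  funext j
  induction j using Fin.cases with
  | zero => simp [dl]
  | succ j' =>
      simp only [dl, Fin.cons_succ, Fin.val_succ]
      by_cases h : (j' : ℕ) < (i : ℕ)
      · rw [if_pos (by omega), if_pos h]
        have : (j'.succ).castSucc = (j'.castSucc).succ := rfl
        rw [this, Fin.cons_succ]
      · rw [if_neg (by omega), if_neg h]


theorem Sm_comp (a b : ZMod m) (k : ℕ) :
    (Sm m a k).comp (Sm m b k) = Sm m (a + b) k := by
  apply lhom_ext1; intro x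
  simp only [LinearMap.comp_apply, Sm_single]
  congr 1; funext j; ring

theorem Sm_zero (k : ℕ) : Sm m 0 k = LinearMap.id := by
  apply lhom_ext1; intro x
  simp [Sm_single]

theorem Dm_comp_Sm (c : ZMod m) (k : ℕ) :
    (Dm m k).comp (Sm m c (k+1)) = (Sm m c k).comp (Dm m k) := by
  apply lhom_ext1; intro x
  simp only [LinearMap.comp_apply, Sm_single, Dm_single, map_sum, LinearMap.map_smul]
  refine Finset.sum_congr rfl fun i _ => ?_
  rw [dl_addc]

theorem bnd_eq (k : ℕ) :
    bnd m k = (Dm m k).comp (LinearMap.id - Sm m 1 (k+1)) := by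
  apply lhom_ext1; intro x
  simp only [LinearMap.comp_apply, LinearMap.sub_apply, LinearMap.id_apply, Sm_single,
    map_sub, Dm_single, bnd, Finsupp.linearCombination_single, one_smul]
  rw [← Finset.sum_sub_distrib]
  refine Finset.sum_congr rfl fun i _ => ?_
  rw [smul_sub, dr_eq_dl]

theorem Sm_comp_Hm [NeZero m] (c : ZMod m) (k : ℕ) :
    (Sm m c (k+1)).comp (Hm m k) = (Hm m k).comp (Sm m c k) := by
  apply lhom_ext1; intro x
  simp only [LinearMap.comp_apply, Hm_single, Sm_single, map_sum]
  refine Fintype.sum_equiv (Equiv.addRight c) _ _ fun c' => ?_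
  congr 1
  funext j
  induction j using Fin.cases with
  | zero => simp [Equiv.addRight]
  | succ j => simp [Equiv.addRight]

theorem Sm_comp_Nm [NeZero m] (c : ZMod m) (k : ℕ) :
    (Sm m c k).comp (Nm m k) = Nm m k := by
  apply lhom_ext1; intro x
  simp only [LinearMap.comp_apply, Nm_single, map_sum, Sm_single]
  refine Fintype.sum_equiv (Equiv.addRight c) _ _ fun c' => ?_
  congr 1
  funext j
  simp [Equiv.addRight, add_assoc]

theorem Nm_comp_Sm [NeZero m] (c : ZMod m) (k : ℕ) :
    (Nm m k).comp (Sm m c k) = Nm m k := by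
  apply lhom_ext1; intro x
  simp only [LinearMap.comp_apply, Sm_single, Nm_single]
  refine Fintype.sum_equiv (Equiv.addLeft c) _ _ fun c' => ?_
  congr 1
  funext j
  simp [Equiv.addLeft]
  ring

theorem Nm_comp_Nm [NeZero m] (k : ℕ) :
    (Nm m k).comp (Nm m k) = (m:ℤ) • Nm m k := by
  apply lhom_ext1; intro x
  simp only [LinearMap.comp_apply, Nm_single, map_sum, LinearMap.smul_apply]
  have hinner : ∀ c' : ZMod m,
      (∑ c : ZMod m, Finsupp.single (fun j => x j + c' + c) (1:ℤ))
        = ∑ c : ZMod m, Finsupp.single (fun j => x j + c) (1:ℤ) := by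
    intro c'
    refine Fintype.sum_equiv (Equiv.addLeft c') _ _ fun c => ?_
    congr 1
    funext j
    simp [Equiv.addLeft]
    ring
  rw [Finset.sum_congr rfl fun c' _ => hinner c', Finset.sum_const, Finset.card_univ,
    ZMod.card, ← Nat.cast_smul_eq_nsmul ℤ m]

theorem Dm_comp_Nm [NeZero m] (k : ℕ) :
    (Dm m k).comp (Nm m (k+1)) = (Nm m k).comp (Dm m k) := by
  apply LinearMap.ext; intro v
  simp only [LinearMap.comp_apply, Nm, LinearMap.sum_apply, map_sum]
  exact Finset.sum_congr rfl fun c _ => LinearMap.congr_fun (Dm_comp_Sm c k) v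

theorem Hm_comp_Nm [NeZero m] (k : ℕ) :
    (Hm m k).comp (Nm m k) = (Nm m (k+1)).comp (Hm m k) := by
  apply LinearMap.ext; intro v
  simp only [LinearMap.comp_apply, Nm, LinearMap.sum_apply, map_sum]
  exact Finset.sum_congr rfl fun c _ => (LinearMap.congr_fun (Sm_comp_Hm c k) v).symm

theorem homotopy [NeZero m] (k : ℕ) (x : Fin (k+1) → ZMod m) :
    Dm m (k+1) (Hm m (k+1) (Finsupp.single x 1)) + Hm m k (Dm m k (Finsupp.single x 1))
      = (m:ℤ) • Finsupp.single x 1 := by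
  have hA : ∀ c : ZMod m, Dm m (k+1) (Finsupp.single (Fin.cons c x) 1) =
      Finsupp.single x 1
        - ∑ i : Fin (k+1), (-1:ℤ)^(i:ℕ) • Finsupp.single (Fin.cons (c-1) (dl m k i x) : Fin (k+1) → ZMod m) (1:ℤ) := by
    intro c
    rw [Dm_single, Fin.sum_univ_succ]
    simp only [Fin.val_zero, pow_zero, one_smul, dl_cons_zero, Fin.val_succ, dl_cons_succ,
      pow_succ, mul_neg_one, neg_smul, Finset.sum_neg_distrib]
    simp only [sub_eq_add_neg]
  rw [Hm_single, map_sum, Dm_single, map_sum]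
  simp only [LinearMap.map_smul, Hm_single]
  rw [Finset.sum_congr rfl fun c _ => hA c, Finset.sum_sub_distrib]
  have h1 : ∑ _c : ZMod m, Finsupp.single x (1:ℤ) = (m:ℤ) • Finsupp.single x 1 := by
    rw [Finset.sum_const, Finset.card_univ, ZMod.card, ← Nat.cast_smul_eq_nsmul ℤ m]
  have h2 : ∑ c : ZMod m, ∑ i : Fin (k+1),
        (-1:ℤ)^(i:ℕ) • Finsupp.single (Fin.cons (c-1) (dl m k i x) : Fin (k+1) → ZMod m) (1:ℤ)
      = ∑ i : Fin (k+1), (-1:ℤ)^(i:ℕ) •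
          ∑ c : ZMod m, Finsupp.single (Fin.cons c (dl m k i x) : Fin (k+1) → ZMod m) (1:ℤ) := by
    rw [Finset.sum_comm]
    refine Finset.sum_congr rfl fun i _ => ?_
    rw [Finset.smul_sum]
    refine Fintype.sum_equiv (Equiv.subRight (1:ZMod m)) _ _ fun c => rfl
  rw [h1, h2, sub_add_cancel]

noncomputable def Gm (m k : ℕ) : C m k →ₗ[ℤ] C m k :=
  ∑ j ∈ Finset.range m, ∑ i ∈ Finset.range j, (Sm m 1 k)^i

theorem pow_Sm (k i : ℕ) : (Sm m 1 k)^i = Sm m ((i : ℕ) : ZMod m) k := by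
  induction i with
  | zero =>
      rw [pow_zero, Nat.cast_zero, Sm_zero]
      rfl
  | succ i ih =>
      rw [pow_succ, ih, Module.End.mul_eq_comp, Sm_comp]
      congr 1
      push_cast
      ring

theorem sum_pow_Sm [NeZero m] (k : ℕ) :
    ∑ j ∈ Finset.range m, (Sm m 1 k)^j = Nm m k := by
  simp_rw [pow_Sm]
  rw [← Fin.sum_univ_eq_sum_range (fun j => Sm m ((j:ℕ) : ZMod m) k) m]
  have hb : Function.Bijective (fun i : Fin m => ((i : ℕ) : ZMod m)) := by
    rw [Fintype.bijective_iff_injective_and_card]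
    constructor
    · intro i j hij
      simp only at hij
      have h2 := congrArg ZMod.val hij
      rw [ZMod.val_cast_of_lt i.isLt, ZMod.val_cast_of_lt j.isLt] at h2
      exact Fin.ext h2
    · simp [ZMod.card]
  exact Fintype.sum_bijective _ hb _ _ fun i => rfl

theorem sub_comp_Gm [NeZero m] (k : ℕ) :
    (LinearMap.id - Sm m 1 k).comp (Gm m k) = (m:ℤ) • LinearMap.id - Nm m k := by
  have hmul : (1 - Sm m 1 k) * Gm m k = (m:ℤ) • 1 - Nm m k := by
    unfold Gm
    rw [Finset.mul_sum]
    have hj : ∀ j : ℕ, (1 - Sm m 1 k) * ∑ i ∈ Finset.range j, (Sm m 1 k)^i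
        = 1 - (Sm m 1 k)^j := by
      intro j
      rw [Finset.mul_sum]
      have : ∀ i : ℕ, (1 - Sm m 1 k) * (Sm m 1 k)^i = (Sm m 1 k)^i - (Sm m 1 k)^(i+1) := by
        intro i
        rw [sub_mul, one_mul, ← pow_succ']
      rw [Finset.sum_congr rfl fun i _ => this i, Finset.sum_range_sub', pow_zero]
    rw [Finset.sum_congr rfl fun j _ => hj j, Finset.sum_sub_distrib, Finset.sum_const,
      Finset.card_range, sum_pow_Sm, ← Nat.cast_smul_eq_nsmul ℤ m]
  have h1 : (1 : C m k →ₗ[ℤ] C m k) = LinearMap.id := rfl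
  rw [← Module.End.mul_eq_comp, ← h1, hmul]


theorem homotopyL [NeZero m] (k : ℕ) :
    (Dm m (k+1)).comp (Hm m (k+1)) + (Hm m k).comp (Dm m k)
      = (m:ℤ) • (LinearMap.id : C m (k+1) →ₗ[ℤ] C m (k+1)) := by
  apply lhom_ext1; intro x
  simpa using homotopy k x

/-- the retraction to orbit representatives -/
def rho (m n : ℕ) (x : Fin (n+1) → ZMod m) : Fin n → ZMod m :=
  fun j => x j.succ - x 0

noncomputable def Phi (m n : ℕ) [NeZero m] :
    ((Fin n → ZMod m) →₀ ℤ) →ₗ[ℤ] C m (n+1) :=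
  (Nm m (n+1)).comp (Finsupp.lmapDomain ℤ ℤ (fun y => Fin.cons (0 : ZMod m) y))

theorem Phi_single [NeZero m] {n : ℕ} (y : Fin n → ZMod m) :
    Phi m n (Finsupp.single y 1)
      = ∑ c : ZMod m, Finsupp.single (fun j => (Fin.cons (0 : ZMod m) y : Fin (n+1) → ZMod m) j + c) (1:ℤ) := by
  rw [Phi, LinearMap.comp_apply, Finsupp.lmapDomain_apply, Finsupp.mapDomain_single, Nm_single]

theorem cons_rho {n : ℕ} (x : Fin (n+1) → ZMod m) (j : Fin (n+1)) :
    (Fin.cons (0 : ZMod m) (rho m n x) : Fin (n+1) → ZMod m) j = x j - x 0 := by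
  induction j using Fin.cases with
  | zero => simp
  | succ j => simp [rho]

theorem Nm_factor [NeZero m] (n : ℕ) :
    Nm m (n+1) = (Phi m n).comp (Finsupp.lmapDomain ℤ ℤ (rho m n)) := by
  apply lhom_ext1; intro x
  rw [LinearMap.comp_apply, Finsupp.lmapDomain_apply, Finsupp.mapDomain_single, Nm_single,
    Phi_single]
  refine Fintype.sum_equiv (Equiv.addRight (x 0)) _ _ fun c => ?_
  congr 1
  funext j
  rw [cons_rho]
  simp only [Equiv.coe_addRight]
  ring

theorem Phi_injective [NeZero m] (n : ℕ) : Function.Injective (Phi m n) := by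
  have key : ∀ y : Fin n → ZMod m,
      (Finsupp.lapply (Fin.cons (0:ZMod m) y)).comp (Phi m n) = Finsupp.lapply y := by
    intro y
    apply lhom_ext1; intro y'
    rw [LinearMap.comp_apply, Phi_single]
    simp only [Finsupp.lapply_apply]
    rw [Finsupp.finset_sum_apply]
    have hcond : ∀ c : ZMod m,
        ((fun j => (Fin.cons (0:ZMod m) y' : Fin (n+1) → ZMod m) j + c) = (Fin.cons (0:ZMod m) y : Fin (n+1) → ZMod m)) ↔
          (c = 0 ∧ y' = y) := by
      intro c
      constructor
      · intro h
        have h0 := congrFun h 0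
        simp at h0
        subst h0
        refine ⟨rfl, funext fun j => ?_⟩
        have hj := congrFun h j.succ
        simpa using hj
      · rintro ⟨rfl, rfl⟩
        funext j
        simp
    have hterm : ∀ c : ZMod m,
        (Finsupp.single (fun j => (Fin.cons (0:ZMod m) y' : Fin (n+1) → ZMod m) j + c) (1:ℤ))
            (Fin.cons (0:ZMod m) y)
          = if c = 0 then (if y' = y then (1:ℤ) else 0) else 0 := by
      intro c
      rw [Finsupp.single_apply]
      by_cases hc : c = 0
      · by_cases hy : y' = y
        · simp [hc, hy, (hcond c).mpr ⟨hc, hy⟩]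
        · rw [if_neg, if_pos hc, if_neg hy]
          intro h
          exact hy ((hcond c).mp h).2
      · rw [if_neg, if_neg hc]
        intro h
        exact hc ((hcond c).mp h).1
    rw [Finset.sum_congr rfl fun c _ => hterm c, Finset.sum_ite_eq' Finset.univ (0 : ZMod m)]
    simp only [Finset.mem_univ, if_true, Finsupp.single_apply]
  rw [← LinearMap.ker_eq_bot]
  rw [Submodule.eq_bot_iff]
  intro f hf
  rw [LinearMap.mem_ker] at hf
  ext y
  have := LinearMap.congr_fun (key y) f
  rw [LinearMap.comp_apply, hf] at this
  simpa using this.symm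

end YBaux



open YBaux

/-- the `n`-th integral set-theoretic Yang–Baxter homology group
`H_n = ker ∂_n / im ∂_{n+1}` of the cyclic biquandle `C_m` has rank `m^{n−1}` as an abelian
group. (The degree `n ≥ 1` is realized as `n+1` with `n : ℕ` arbitrary, so the claim reads
`rank H_{n+1} = m^n`.) -/
theorem rank_YB_homology_cyclic_biquandle (m n : ℕ) (hm : 1 ≤ m) :
    Module.finrank ℤ
      (↥(LinearMap.ker (bnd m n)) ⧸
        Submodule.comap (LinearMap.ker (bnd m n)).subtype
          (LinearMap.range (bnd m (n + 1)))) = m ^ n := by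
  haveI : NeZero m := ⟨by omega⟩
  classical
  have hmz : (m:ℤ) ≠ 0 := by exact_mod_cast (by omega : m ≠ 0)
  set K := LinearMap.ker (bnd m n) with hK
  set N := Submodule.comap K.subtype (LinearMap.range (bnd m (n+1))) with hN
  -- bnd kills the image of the norm operator
  have hbndNmL : (bnd m n).comp (Nm m (n+1)) = 0 := by
    rw [bnd_eq n, LinearMap.comp_assoc]
    have h0 : (LinearMap.id - Sm m 1 (n+1)).comp (Nm m (n+1)) = 0 := by
      rw [LinearMap.sub_comp, LinearMap.id_comp, Sm_comp_Nm]
      exact sub_self _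
    rw [h0, LinearMap.comp_zero]
  have hbndNm : ∀ v : C m (n+1), bnd m n (Nm m (n+1) v) = 0 := by
    intro v
    have := LinearMap.congr_fun hbndNmL v
    simpa using this
  have hPhiK : ∀ f, Phi m n f ∈ K := by
    intro f
    rw [hK, LinearMap.mem_ker]
    show bnd m n ((Nm m (n+1)).comp (Finsupp.lmapDomain ℤ ℤ (fun y => Fin.cons (0:ZMod m) y)) f) = 0
    rw [LinearMap.comp_apply]
    exact hbndNm _
  set ψ : ((Fin n → ZMod m) →₀ ℤ) →ₗ[ℤ] (↥K ⧸ N) :=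
    N.mkQ.comp ((Phi m n).codRestrict K hPhiK) with hψ
  -- injectivity of ψ
  have hψinj : Function.Injective ψ := by
    rw [← LinearMap.ker_eq_bot, Submodule.eq_bot_iff]
    intro f hf
    rw [LinearMap.mem_ker, hψ, LinearMap.comp_apply, Submodule.mkQ_apply,
      Submodule.Quotient.mk_eq_zero, hN, Submodule.mem_comap] at hf
    have hf2 : Phi m n f ∈ LinearMap.range (bnd m (n+1)) := hf
    obtain ⟨u, hu⟩ := hf2
    have h3 : Nm m (n+1) (Phi m n f) = 0 := by
      rw [← hu]
      have hcomp : (Nm m (n+1)).comp (bnd m (n+1)) = 0 := by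
        rw [bnd_eq (n+1), ← LinearMap.comp_assoc, ← Dm_comp_Nm (n+1), LinearMap.comp_assoc]
        have h0 : (Nm m (n+2)).comp (LinearMap.id - Sm m 1 (n+2)) = 0 := by
          rw [LinearMap.comp_sub, LinearMap.comp_id, Nm_comp_Sm]
          exact sub_self _
        rw [h0, LinearMap.comp_zero]
      have := LinearMap.congr_fun hcomp u
      simpa using this
    have h4 : Nm m (n+1) (Phi m n f) = (m:ℤ) • Phi m n f := by
      have h5 := LinearMap.congr_fun (Nm_comp_Nm (m := m) (n+1))
        (Finsupp.lmapDomain ℤ ℤ (fun y => Fin.cons (0:ZMod m) y) f)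
      simp only [LinearMap.comp_apply, LinearMap.smul_apply] at h5
      exact h5
    rw [h4] at h3
    have h6 : Phi m n f = 0 := (smul_eq_zero.mp h3).resolve_left hmz
    have := Phi_injective (m := m) n (a₁ := f) (a₂ := 0) (by simpa using h6)
    simpa using this
  -- m^3-surjectivity of ψ
  have hsurj : ∀ q : (↥K ⧸ N), ∃ f, ψ f = ((m:ℤ)^3) • q := by
    intro q
    obtain ⟨z', rfl⟩ := Submodule.Quotient.mk_surjective N q
    have hz : bnd m n (z' : C m (n+1)) = 0 := z'.2
    set z : C m (n+1) := (z' : C m (n+1)) with hzdef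
    set b : C m (n+1) := (m:ℤ) • z - Nm m (n+1) z with hb
    have hNmNm : Nm m (n+1) (Nm m (n+1) z) = (m:ℤ) • Nm m (n+1) z := by
      have h5 := LinearMap.congr_fun (Nm_comp_Nm (m := m) (n+1)) z
      simpa using h5
    have hbker : bnd m n b = 0 := by
      rw [hb, map_sub, LinearMap.map_smul, hz, smul_zero, hbndNm, sub_zero]
    have hNmb : Nm m (n+1) b = 0 := by
      rw [hb, map_sub, LinearMap.map_smul, hNmNm, sub_self]
    -- Dm of b vanishes
    have hw : Dm m n b = 0 := by
      have hTw : Dm m n b - Sm m 1 n (Dm m n b) = 0 := by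
        have hc : (LinearMap.id - Sm m 1 n).comp (Dm m n)
            = (Dm m n).comp (LinearMap.id - Sm m 1 (n+1)) := by
          rw [LinearMap.sub_comp, LinearMap.comp_sub, LinearMap.id_comp, LinearMap.comp_id,
            Dm_comp_Sm]
        have h1 := LinearMap.congr_fun hc b
        have h2 := LinearMap.congr_fun (bnd_eq (m := m) n) b
        simp only [LinearMap.comp_apply, LinearMap.sub_apply, LinearMap.id_apply] at h1 h2
        rw [h1, ← h2, hbker]
      have hNw : Nm m n (Dm m n b) = 0 := by
        have h1 := LinearMap.congr_fun (Dm_comp_Nm (m := m) n) b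
        simp only [LinearMap.comp_apply] at h1
        rw [← h1, hNmb, map_zero]
      have hGw : Gm m n (Dm m n b) - Sm m 1 n (Gm m n (Dm m n b)) = 0 := by
        have hcomm : (Gm m n) * ((1 : C m n →ₗ[ℤ] C m n) - Sm m 1 n)
            = ((1 : C m n →ₗ[ℤ] C m n) - Sm m 1 n) * (Gm m n) := by
          unfold Gm
          rw [Finset.sum_mul, Finset.mul_sum]
          refine Finset.sum_congr rfl fun j _ => ?_
          rw [Finset.sum_mul, Finset.mul_sum]
          refine Finset.sum_congr rfl fun i _ => ?_
          exact ((Commute.one_right ((Sm m 1 n)^i)).sub_right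
            ((Commute.refl (Sm m 1 n)).pow_left i)).eq
        have h1 := LinearMap.congr_fun hcomm (Dm m n b)
        simp only [Module.End.mul_apply, LinearMap.sub_apply, Module.End.one_apply] at h1
        rw [← h1, hTw, map_zero]
      have hmw : (m:ℤ) • (Dm m n b) - Nm m n (Dm m n b) = 0 := by
        have h1 := LinearMap.congr_fun (sub_comp_Gm (m := m) n) (Dm m n b)
        simp only [LinearMap.comp_apply, LinearMap.sub_apply, LinearMap.smul_apply,
          LinearMap.id_apply] at h1
        rw [← h1]
        exact hGw
      rw [hNw, sub_zero] at hmw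
      exact (smul_eq_zero.mp hmw).resolve_left hmz
    -- m • b = Dm (Hm b)
    have hmb : (m:ℤ) • b = Dm m (n+1) (Hm m (n+1) b) := by
      have h1 := LinearMap.congr_fun (homotopyL (m := m) n) b
      simp only [LinearMap.add_apply, LinearMap.comp_apply, LinearMap.smul_apply,
        LinearMap.id_apply] at h1
      rw [hw, map_zero, add_zero] at h1
      exact h1.symm
    have hNHb : Nm m (n+2) (Hm m (n+1) b) = 0 := by
      have h1 := LinearMap.congr_fun (Hm_comp_Nm (m := m) (n+1)) b
      simp only [LinearMap.comp_apply] at h1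
      rw [← h1, hNmb, map_zero]
    have hmHb : Gm m (n+2) (Hm m (n+1) b) - Sm m 1 (n+2) (Gm m (n+2) (Hm m (n+1) b))
        = (m:ℤ) • (Hm m (n+1) b) := by
      have h1 := LinearMap.congr_fun (sub_comp_Gm (m := m) (n+2)) (Hm m (n+1) b)
      simp only [LinearMap.comp_apply, LinearMap.sub_apply, LinearMap.smul_apply,
        LinearMap.id_apply] at h1
      rw [h1, hNHb, sub_zero]
    have hm2b : (m:ℤ)^2 • b ∈ LinearMap.range (bnd m (n+1)) := by
      refine ⟨Gm m (n+2) (Hm m (n+1) b), ?_⟩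
      have h2 := LinearMap.congr_fun (bnd_eq (m := m) (n+1)) (Gm m (n+2) (Hm m (n+1) b))
      simp only [LinearMap.comp_apply, LinearMap.sub_apply, LinearMap.id_apply] at h2
      rw [h2, hmHb, LinearMap.map_smul, ← hmb, pow_two, mul_smul]
    -- Nm z = Phi f₀
    set f₀ := Finsupp.lmapDomain ℤ ℤ (rho m n) z with hf₀
    have hNz : Nm m (n+1) z = Phi m n f₀ := by
      have h1 := LinearMap.congr_fun (Nm_factor (m := m) n) z
      simpa [hf₀] using h1
    refine ⟨(m:ℤ)^2 • f₀, ?_⟩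
    have key : ((m:ℤ)^3) • z' - ((Phi m n).codRestrict K hPhiK) ((m:ℤ)^2 • f₀) ∈ N := by
      rw [hN, Submodule.mem_comap]
      have hval : (K.subtype) (((m:ℤ)^3) • z'
          - ((Phi m n).codRestrict K hPhiK) ((m:ℤ)^2 • f₀)) = (m:ℤ)^2 • b := by
        rw [map_sub, map_smul]
        have h2 : (K.subtype) (((Phi m n).codRestrict K hPhiK) ((m:ℤ)^2 • f₀))
            = (m:ℤ)^2 • Phi m n f₀ := by
          simp [LinearMap.codRestrict_apply, map_smul]
        rw [h2, ← hNz]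
        have hz3 : (K.subtype) z' = z := rfl
        rw [hz3, hb]
        rw [smul_sub, smul_smul, ← pow_succ]
      rw [hval]
      exact hm2b
    have := (Submodule.Quotient.eq N).mpr key
    rw [hψ, LinearMap.comp_apply, Submodule.mkQ_apply, ← this, Submodule.Quotient.mk_smul]
  -- rank bookkeeping
  haveI : Module.Finite ℤ ↥K := by
    haveI : IsNoetherian ℤ (C m (n+1)) := isNoetherian_of_isNoetherianRing_of_finite ℤ _
    exact Module.Finite.iff_fg.mpr (IsNoetherian.noetherian K)
  haveI : Module.Finite ℤ (↥K ⧸ N) := Module.Finite.quotient ℤ N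
  set S := LinearMap.range ψ with hS
  have hrk0 : Module.rank ℤ ((↥K ⧸ N) ⧸ S) = 0 := by
    rw [rank_eq_zero_iff]
    intro x
    obtain ⟨q, rfl⟩ := Submodule.Quotient.mk_surjective S x
    refine ⟨(m:ℤ)^3, pow_ne_zero _ hmz, ?_⟩
    obtain ⟨f, hf⟩ := hsurj q
    rw [← Submodule.Quotient.mk_smul, ← hf, Submodule.Quotient.mk_eq_zero]
    exact ⟨f, rfl⟩
  have hrank : Module.rank ℤ (↥K ⧸ N) = Module.rank ℤ ↥S := by
    have h1 := Submodule.rank_quotient_add_rank S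
    rw [hrk0, zero_add] at h1
    exact h1.symm
  have hSe : Module.finrank ℤ ↥S = m ^ n := by
    have e : ((Fin n → ZMod m) →₀ ℤ) ≃ₗ[ℤ] ↥S := LinearEquiv.ofInjective ψ hψinj
    rw [← e.finrank_eq, Module.finrank_finsupp_self, Fintype.card_fun, ZMod.card,
      Fintype.card_fin]
  have hfr : Module.finrank ℤ (↥K ⧸ N) = Module.finrank ℤ ↥S := by
    rw [Module.finrank, Module.finrank, hrank]
  rw [hfr, hSe]
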